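/- Let H be a simple undirected graph on vertex set {1, …, n} with n ≥ 5. Let S ⊆ ℝ^n be the set of all vectors 𝟙_{i,j} (for 1 ≤ i < j ≤ n) having value 1 in coordinates i and j and 0 in all other coordinates. Let T ⊆ ℝ^n be the set of all vectors having value 1/2 in all coordinates except two coordinates i < j, in which they take values a_i, a_j ∈ {1, 2, 3}, subject to the restriction that a_i ≠ a_j whenever {i, j} is an edge of H. Then there exists a map Ψ : S → S ∪ T such that (1) Ψ(v) ⪰ v for all v ∈ S, (2) Ψ(v) ≻ v for some v ∈ S, and (3) for every coordinate k there exist m_k > 0 and b_k ∈ ℝ with Ψ_k(v) = m_k v_k + b_k for all v ∈ S, if and only if H is 3-colorable, i.e., there exists c : {1, …, n} → {1, 2, 3} with c(i) ≠ c(j) for every edge {i, j} of H. -/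

import Mathlib

namespace SPIs

/-- `Pareto x y` means `y` is a weak Pareto improvement on `x`, i.e. `y ⪰ x`. -/
def Pareto {n : ℕ} (x y : Fin n → ℝ) : Prop := ∀ k, x k ≤ y k

/-- `StrictPareto x y` means `y` is a strict Pareto improvement on `x`, i.e. `y ≻ x`. -/
def StrictPareto {n : ℕ} (x y : Fin n → ℝ) : Prop := Pareto x y ∧ ∃ k, x k < y k

/-- The set `S` of input vectors: all vectors with value `1` in two coordinates `i ≠ j`
and `0` elsewhere. -/
def colS (n : ℕ) : Set (Fin n → ℝ) :=
  {v | ∃ i j : Fin n, i ≠ j ∧ v = fun k => if k = i ∨ k = j then (1 : ℝ) else 0}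

/-- The set `T` of target vectors for the graph `H`: all vectors with value `1/2` in all but
two coordinates `i ≠ j`, where they take values `a_i, a_j ∈ {1, 2, 3}` with `a_i ≠ a_j`
whenever `{i, j}` is an edge of `H`. -/
def colT {n : ℕ} (H : SimpleGraph (Fin n)) : Set (Fin n → ℝ) :=
  {v | ∃ i j : Fin n, i ≠ j ∧ ∃ ai aj : ℝ,
    ai ∈ ({1, 2, 3} : Set ℝ) ∧ aj ∈ ({1, 2, 3} : Set ℝ) ∧ (H.Adj i j → ai ≠ aj) ∧
    v = fun k => if k = i then ai else if k = j then aj else 1 / 2}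

/-- The indicator vector of the pair `{i, j}`. -/
def E {n : ℕ} (i j : Fin n) : Fin n → ℝ := fun k => if k = i ∨ k = j then 1 else 0

lemma E_mem {n : ℕ} {i j : Fin n} (h : i ≠ j) : E i j ∈ colS n := ⟨i, j, h, rfl⟩

lemma E_apply_left {n : ℕ} (i j : Fin n) : E i j i = 1 := by simp [E]

lemma E_apply_right {n : ℕ} (i j : Fin n) : E i j j = 1 := by simp [E]

lemma E_apply_other {n : ℕ} {i j k : Fin n} (hki : k ≠ i) (hkj : k ≠ j) : E i j k = 0 := by
  simp [E, hki, hkj]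

lemma exists_notMem_finset {n : ℕ} (s : Finset (Fin n)) (h : s.card < n) : ∃ k, k ∉ s := by
  by_contra hc
  push_neg at hc
  have hsub : Finset.univ ⊆ s := fun x _ => hc x
  have := Finset.card_le_card hsub
  simp [Finset.card_univ] at this
  omega

/-- If `Ψ` is Pareto-improving and `Ψ (E i j)` lies in `colS`, it must equal `E i j`. -/
lemma fix_of_mem_colS {n : ℕ} {Ψ : (Fin n → ℝ) → Fin n → ℝ}
    (hpar : ∀ v ∈ colS n, Pareto v (Ψ v)) {i j : Fin n} (hij : i ≠ j)
    (hS : Ψ (E i j) ∈ colS n) : Ψ (E i j) = E i j := by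
  obtain ⟨p, q, hpq, heq⟩ := hS
  have hi : i = p ∨ i = q := by
    by_contra h
    push_neg at h
    have := hpar (E i j) (E_mem hij) i
    rw [E_apply_left, heq] at this
    simp only [h.1, h.2, or_self, if_false] at this
    linarith
  have hj : j = p ∨ j = q := by
    by_contra h
    push_neg at h
    have := hpar (E i j) (E_mem hij) j
    rw [E_apply_right, heq] at this
    simp only [h.1, h.2, or_self, if_false] at this
    linarith
  rw [heq]
  funext k
  show (if k = p ∨ k = q then (1:ℝ) else 0) = (if k = i ∨ k = j then (1:ℝ) else 0)
  rcases hi with rfl | rfl <;> rcases hj with rfl | rfl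
  · exact absurd rfl hij
  · rfl
  · simp [or_comm]
  · exact absurd rfl hij

/-- Normalized form of membership of `Ψ (E i j)` in `colT`, using Pareto improvement. -/
lemma normT {n : ℕ} {H : SimpleGraph (Fin n)} {Ψ : (Fin n → ℝ) → Fin n → ℝ}
    (hpar : ∀ v ∈ colS n, Pareto v (Ψ v)) {i j : Fin n} (hij : i ≠ j)
    (hT : Ψ (E i j) ∈ colT H) :
    Ψ (E i j) i ∈ ({1, 2, 3} : Set ℝ) ∧ Ψ (E i j) j ∈ ({1, 2, 3} : Set ℝ) ∧
      (H.Adj i j → Ψ (E i j) i ≠ Ψ (E i j) j) ∧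
      ∀ k, k ≠ i → k ≠ j → Ψ (E i j) k = 1 / 2 := by
  obtain ⟨p, q, hpq, ai, aj, hai, haj, hadj, heq⟩ := hT
  have hi : i = p ∨ i = q := by
    by_contra h
    push_neg at h
    have := hpar (E i j) (E_mem hij) i
    rw [E_apply_left, heq] at this
    simp only [h.1, h.2, or_self, if_false] at this
    linarith
  have hj : j = p ∨ j = q := by
    by_contra h
    push_neg at h
    have := hpar (E i j) (E_mem hij) j
    rw [E_apply_right, heq] at this
    simp only [h.1, h.2, or_self, if_false] at this
    linarith
  rcases hi with rfl | rfl <;> rcases hj with rfl | rfl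
  · exact absurd rfl hij
  · refine ⟨by rw [heq]; simpa using hai, by rw [heq]; simp [hpq, hpq.symm]; exact haj,
      fun ha => by rw [heq]; simp [hpq, hpq.symm]; exact hadj ha, fun k hki hkj => by
        rw [heq]; simp [hki, hkj]⟩
  · refine ⟨by rw [heq]; simp [hpq.symm]; exact haj, by rw [heq]; simpa using hai,
      fun ha => by
        rw [heq]; simp [hpq.symm]
        exact (hadj ha.symm).symm, fun k hki hkj => by
        rw [heq]; simp [hkj, hki]⟩
  · exact absurd rfl hij

/-- reduction in Theorem 7 of the paper: a strictly Pareto improving,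
entrywise positive affine map from `S` into `S ∪ T` exists iff `H` is 3-colorable. -/
theorem remap_iff_three_colorable (n : ℕ) (hn : 5 ≤ n) (H : SimpleGraph (Fin n)) :
    (∃ Ψ : (Fin n → ℝ) → Fin n → ℝ,
        (∀ v ∈ colS n, Ψ v ∈ colS n ∪ colT H) ∧
        (∀ v ∈ colS n, Pareto v (Ψ v)) ∧
        (∃ v ∈ colS n, StrictPareto v (Ψ v)) ∧
        (∀ k : Fin n, ∃ m b : ℝ, 0 < m ∧ ∀ v ∈ colS n, Ψ v k = m * v k + b)) ↔
      (∃ c : Fin n → Fin 3, ∀ i j : Fin n, H.Adj i j → c i ≠ c j) := by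
  constructor
  · rintro ⟨Ψ, hmem, hpar, ⟨v0, hv0, hstrict⟩, haff⟩
    choose m b hm hb using haff
    -- every pair maps into T
    have hET : ∀ i j : Fin n, i ≠ j → Ψ (E i j) ∈ colT H := by
      intro i j hij
      rcases hmem _ (E_mem hij) with hS | hT
      · exfalso
        have h0 : ∀ k, k ≠ i → k ≠ j → b k = 0 := by
          intro k hki hkj
          have h1 := hb k (E i j) (E_mem hij)
          rw [fix_of_mem_colS hpar hij hS, E_apply_other hki hkj] at h1
          linarith
        obtain ⟨i', j', hij', hv0eq⟩ := id hv0
        have hv0E : v0 = E i' j' := hv0eq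
        rcases hmem _ hv0 with hS' | hT'
        · rw [hv0E] at hS' hstrict
          obtain ⟨_, k, hk⟩ := hstrict
          rw [fix_of_mem_colS hpar hij' hS'] at hk
          exact lt_irrefl _ hk
        · rw [hv0E] at hT'
          obtain ⟨k, hk⟩ : ∃ k, k ∉ ({i, j, i', j'} : Finset (Fin n)) := by
            apply exists_notMem_finset
            calc ({i, j, i', j'} : Finset (Fin n)).card ≤ 4 := by
                  apply le_trans (Finset.card_insert_le _ _)
                  apply Nat.succ_le_succ
                  apply le_trans (Finset.card_insert_le _ _)
                  apply Nat.succ_le_succ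
                  apply le_trans (Finset.card_insert_le _ _)
                  simp
              _ < n := by omega
          simp only [Finset.mem_insert, Finset.mem_singleton, not_or] at hk
          obtain ⟨hk1, hk2, hk3, hk4⟩ := hk
          have h12 := (normT hpar hij' hT').2.2.2 k hk3 hk4
          have h1 := hb k (E i' j') (E_mem hij')
          rw [h12, E_apply_other hk3 hk4] at h1
          have := h0 k hk1 hk2
          rw [this] at h1
          norm_num at h1
      · exact hT
    -- b k = 1/2 for all k
    have hb2 : ∀ k, b k = 1 / 2 := by
      intro k
      obtain ⟨i, hi⟩ : ∃ i, i ∉ ({k} : Finset (Fin n)) :=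
        exists_notMem_finset _ (by simp; omega)
      obtain ⟨j, hj⟩ : ∃ j, j ∉ ({k, i} : Finset (Fin n)) := by
        apply exists_notMem_finset
        calc ({k, i} : Finset (Fin n)).card ≤ 2 := by
              apply le_trans (Finset.card_insert_le _ _); simp
          _ < n := by omega
      simp only [Finset.mem_singleton] at hi
      simp only [Finset.mem_insert, Finset.mem_singleton, not_or] at hj
      have hij : i ≠ j := fun h => hj.2 h.symm
      have hki : k ≠ i := fun h => hi h.symm
      have hkj : k ≠ j := fun h => hj.1 h.symm
      have h12 := (normT hpar hij (hET i j hij)).2.2.2 k hki hkj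
      have h1 := hb k (E i j) (E_mem hij)
      rw [h12, E_apply_other hki hkj] at h1
      linarith
    -- the diagonal values are in {1, 2, 3}
    have hval : ∀ k, m k + 1 / 2 = 1 ∨ m k + 1 / 2 = 2 ∨ m k + 1 / 2 = 3 := by
      intro k
      obtain ⟨j, hj⟩ : ∃ j, j ∉ ({k} : Finset (Fin n)) :=
        exists_notMem_finset _ (by simp; omega)
      simp only [Finset.mem_singleton] at hj
      have hkj : k ≠ j := fun h => hj h.symm
      have h1 := (normT hpar hkj (hET k j hkj)).1
      have h2 := hb k (E k j) (E_mem hkj)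
      rw [E_apply_left] at h2
      rw [h2, hb2 k] at h1
      simpa [mul_one] using h1
    -- adjacency forces distinct values
    have hedge : ∀ i j, H.Adj i j → m i + 1 / 2 ≠ m j + 1 / 2 := by
      intro i j ha
      have hij : i ≠ j := H.ne_of_adj ha
      have h3 := (normT hpar hij (hET i j hij)).2.2.1 ha
      have h1 := hb i (E i j) (E_mem hij)
      have h2 := hb j (E i j) (E_mem hij)
      rw [E_apply_left] at h1
      rw [E_apply_right] at h2
      rw [h1, h2, hb2 i, hb2 j, mul_one (m i), mul_one (m j)] at h3
      exact h3
    -- build the coloring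
    have key : ∀ p q : ℝ, (p = 1 ∨ p = 2 ∨ p = 3) → (q = 1 ∨ q = 2 ∨ q = 3) → p ≠ q →
        (if p = 1 then (0 : Fin 3) else if p = 2 then 1 else 2) ≠
          (if q = 1 then (0 : Fin 3) else if q = 2 then 1 else 2) := by
      intro p q hp hq hne
      rcases hp with rfl | rfl | rfl <;> rcases hq with rfl | rfl | rfl <;>
        first
          | exact absurd rfl hne
          | (norm_num; decide)
          | norm_num
    exact ⟨fun k => if m k + 1 / 2 = 1 then 0 else if m k + 1 / 2 = 2 then 1 else 2,
      fun i j ha => key _ _ (hval i) (hval j) (hedge i j ha)⟩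
  · rintro ⟨c, hc⟩
    refine ⟨fun v k => ((c k : ℝ) + 1 / 2) * v k + 1 / 2, ?_, ?_, ?_, ?_⟩
    · rintro v ⟨i, j, hij, rfl⟩
      right
      have hval : ∀ k : Fin n, ((c k : ℝ) + 1) ∈ ({1, 2, 3} : Set ℝ) := by
        intro k
        have h3 := (c k).isLt
        have : (c k : ℕ) = 0 ∨ (c k : ℕ) = 1 ∨ (c k : ℕ) = 2 := by omega
        rcases this with h | h | h <;> simp [h] <;> norm_num
      refine ⟨i, j, hij, (c i : ℝ) + 1, (c j : ℝ) + 1, hval i, hval j, ?_, ?_⟩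
      · intro ha hij'
        apply hc i j ha
        have : ((c i : ℕ) : ℝ) = ((c j : ℕ) : ℝ) := by linarith
        have : (c i : ℕ) = (c j : ℕ) := Nat.cast_injective this
        exact Fin.ext this
      · funext k
        by_cases hki : k = i
        · subst hki
          simp
          ring
        · by_cases hkj : k = j
          · subst hkj
            simp [hki]
            ring
          · simp [hki, hkj]
    · rintro v ⟨i, j, hij, rfl⟩ k
      simp only
      by_cases hk : k = i ∨ k = j
      · simp only [hk, if_true]
        have : (0:ℝ) ≤ (c k : ℝ) := Nat.cast_nonneg _
        linarith
      · simp only [hk, if_false]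
        have : (0:ℝ) ≤ (c k : ℝ) := Nat.cast_nonneg _
        nlinarith
    · have h01 : (⟨0, by omega⟩ : Fin n) ≠ ⟨1, by omega⟩ := by
        simp [Fin.ext_iff]
      refine ⟨E ⟨0, by omega⟩ ⟨1, by omega⟩, E_mem h01, ?_, ⟨2, by omega⟩, ?_⟩
      · intro k
        simp only [E]
        by_cases hk : k = (⟨0, by omega⟩ : Fin n) ∨ k = ⟨1, by omega⟩
        · simp only [hk, if_true]
          have : (0:ℝ) ≤ (c k : ℝ) := Nat.cast_nonneg _
          linarith
        · simp only [hk, if_false]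
          have : (0:ℝ) ≤ (c k : ℝ) := Nat.cast_nonneg _
          nlinarith
      · have h20 : (⟨2, by omega⟩ : Fin n) ≠ ⟨0, by omega⟩ := by simp [Fin.ext_iff]
        have h21 : (⟨2, by omega⟩ : Fin n) ≠ ⟨1, by omega⟩ := by simp [Fin.ext_iff]
        have : (0:ℝ) ≤ (c (⟨2, by omega⟩ : Fin n) : ℝ) := Nat.cast_nonneg _
        norm_num [E, Fin.ext_iff]
    · intro k
      refine ⟨(c k : ℝ) + 1 / 2, 1 / 2, by positivity, fun v _ => rfl⟩

end SPIs
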